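/- Let T be a weakly l-sequentially supercyclic operator on a normed space X. If T is weakly stable, then for every y ∈ Y_T, every x ∈ X \ O_T([y]), every scalar sequence {α_k}, and every strictly increasing sequence of nonnegative integers {n_k} such that f(α_k T^{n_k} y) → f(x) for every f ∈ X*, the scalar sequence {α_k} is unbounded. Equivalently, if for some y ∈ Y_T and some x ∈ X \ O_T([y]) there exist such witnessing sequences with {α_k} bounded, then T is not weakly stable. -/

import Mathlib

open Filter

/-- `y` is a weakly l-sequentially supercyclic vector for `T`: every `x ∈ X` is the
weak limit of a sequence `α_k T^{n_k} y` taken from the projective orbit of `y`. -/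
def IsWeaklyLSeqSupercyclicVector {𝕜 X : Type*} [RCLike 𝕜] [NormedAddCommGroup X]
    [NormedSpace 𝕜 X] (T : X →L[𝕜] X) (y : X) : Prop :=
  y ≠ 0 ∧ ∀ x : X, ∃ (α : ℕ → 𝕜) (nk : ℕ → ℕ),
    ∀ f : X →L[𝕜] 𝕜,
      Tendsto (fun k => f (α k • (T ^ nk k) y)) atTop (nhds (f x))

/-- The projective orbit `O_T([y]) = {α T^n y : α ∈ 𝕜, n ≥ 0}` of `y` under `T`. -/
def projectiveOrbit {𝕜 X : Type*} [RCLike 𝕜] [NormedAddCommGroup X]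
    [NormedSpace 𝕜 X] (T : X →L[𝕜] X) (y : X) : Set X :=
  {v | ∃ (α : 𝕜) (n : ℕ), v = α • (T ^ n) y}

/-- **Theorem 6.3.** Let `T` be a weakly l-sequentially supercyclic operator on a
normed space `X`. If `T` is weakly stable, then for every `y ∈ Y_T`, every
`x ∈ X \ O_T([y])`, and all witnessing sequences `{α_k}`, `{n_k}` (with `{n_k}`
strictly increasing) such that `α_k T^{n_k} y` converges weakly to `x`, the scalar
sequence `{α_k}` is unbounded. -/
theorem unbounded_scalars_of_weakly_stable {𝕜 X : Type*}
    [RCLike 𝕜] [NormedAddCommGroup X] [NormedSpace 𝕜 X] (T : X →L[𝕜] X)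
    (hsc : ∃ y : X, IsWeaklyLSeqSupercyclicVector T y)
    (hstab : ∀ (x : X) (f : X →L[𝕜] 𝕜),
      Tendsto (fun n : ℕ => f ((T ^ n) x)) atTop (nhds 0)) :
    ∀ y : X, IsWeaklyLSeqSupercyclicVector T y →
      ∀ x ∉ projectiveOrbit T y, ∀ (α : ℕ → 𝕜) (nk : ℕ → ℕ), StrictMono nk →
        (∀ f : X →L[𝕜] 𝕜,
          Tendsto (fun k => f (α k • (T ^ nk k) y)) atTop (nhds (f x))) →
        ¬ ∃ C : ℝ, ∀ k, ‖α k‖ ≤ C := by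
  rintro y hy x hx α nk hmono hconv ⟨C, hC⟩
  have hx0 : x = 0 := by
    apply NormedSpace.eq_zero_of_forall_dual_eq_zero 𝕜
    intro f
    have h1 : Tendsto (fun k => f ((T ^ nk k) y)) atTop (nhds 0) :=
      (hstab y f).comp hmono.tendsto_atTop
    have h2 : Tendsto (fun k => α k • f ((T ^ nk k) y)) atTop (nhds 0) := by
      rw [tendsto_zero_iff_norm_tendsto_zero]
      apply squeeze_zero (fun k => norm_nonneg _) (fun k => ?_)
        (by simpa using (tendsto_zero_iff_norm_tendsto_zero.mp h1).const_mul (max C 0))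
      rw [norm_smul]
      simpa using mul_le_mul_of_nonneg_right ((hC k).trans (le_max_left C 0)) (norm_nonneg (f ((T ^ nk k) y)))
    have h3 : Tendsto (fun k => f (α k • (T ^ nk k) y)) atTop (nhds 0) := by
      simpa [map_smul, smul_eq_mul] using h2
    exact tendsto_nhds_unique (hconv f) h3
  exact hx ⟨0, 0, by simp [hx0]⟩
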